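/- The kernels of i₀₁ and i₁₂ together span Ṽ, i.e. ker i₀₁ ⊔ ker i₁₂ = Ṽ; consequently finrank (ker i₀₁ ⊓ ker i₁₂) = 64, so the flag variety is contained in a 63-dimensional projective subspace of the 95-dimensional projective space on Ṽ. -/

import Mathlib

open TensorProduct

variable (K V : Type*) [Field K] [AddCommGroup V] [Module K V]

-- Helper instances (the canonical tensor product instances; registering them here merely
-- speeds up instance search, which otherwise gets lost unfolding `⋀[K]^n V`).
noncomputable instance : AddCommGroup (↥(⋀[K]^2 V) ⊗[K] Module.Dual K V) :=
  TensorProduct.addCommGroup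

noncomputable instance : AddCommGroup (V ⊗[K] (↥(⋀[K]^2 V) ⊗[K] Module.Dual K V)) :=
  TensorProduct.addCommGroup

noncomputable instance : AddCommGroup (↥(⋀[K]^3 V) ⊗[K] Module.Dual K V) :=
  TensorProduct.addCommGroup

/-- The wedge `q ∧ r` of two vectors, as an element of the second exterior power. -/
def wedge2 (q r : V) : ⋀[K]^2 V :=
  ⟨ExteriorAlgebra.ιMulti K 2 ![q, r],
    ExteriorAlgebra.ιMulti_range K 2 (Set.mem_range_self _)⟩

/-- The wedge `p ∧ q ∧ r` of three vectors, as an element of the third exterior power. -/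
def wedge3 (p q r : V) : ⋀[K]^3 V :=
  ⟨ExteriorAlgebra.ιMulti K 3 ![p, q, r],
    ExteriorAlgebra.ιMulti_range K 3 (Set.mem_range_self _)⟩

/-- The 96-dimensional space `Ṽ = V ⊗ Λ²V ⊗ V*`. -/
abbrev FlagTensor := V ⊗[K] ↥(⋀[K]^2 V) ⊗[K] (Module.Dual K V)


open Module ExteriorAlgebra

namespace FlagAux

variable {K V : Type*} [Field K] [AddCommGroup V] [Module K V]

/-- Generic generator of the `n`-th exterior power. -/
noncomputable def gen (n : ℕ) (v : Fin n → V) : ↥(⋀[K]^n V) :=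
  ⟨ιMulti K n v, ιMulti_range K n (Set.mem_range_self _)⟩

lemma span_gen (n : ℕ) :
    Submodule.span K (Set.range (gen (K := K) (V := V) n)) = ⊤ := by
  rw [Submodule.eq_top_iff']
  intro x
  have hx : (x : ExteriorAlgebra K V) ∈
      (Submodule.span K (Set.range (gen (K := K) (V := V) n))).map
        (Submodule.subtype _) := by
    rw [Submodule.map_span, ← Set.range_comp]
    have : (Submodule.subtype (⋀[K]^n V)) ∘ (gen (K := K) (V := V) n) = ιMulti K n := rfl
    rw [this, ιMulti_span_fixedDegree]
    exact x.2
  obtain ⟨y, hy, hval⟩ := hx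
  rwa [show x = y from Subtype.ext hval.symm]

variable (b : Basis (Fin 4) K V)

/-- Basis-indexed wedge. -/
noncomputable def wB (n : ℕ) (s : Fin n → Fin 4) : ↥(⋀[K]^n V) :=
  gen n fun i => b (s i)

/-- Dual alternating form picking out the coefficient of a sorted wedge. -/
noncomputable def fAlt (n : ℕ) (s : Fin n → Fin 4) : V [⋀^Fin n]→ₗ[K] K :=
  (Matrix.detRowAlternating).compLinearMap (LinearMap.pi fun i => b.coord (s i))

lemma fAlt_apply (n : ℕ) (s : Fin n → Fin 4) (v : Fin n → V) :
    fAlt b n s v = Matrix.det (Matrix.of fun i j => b.coord (s j) (v i)) := rfl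

lemma coord_basis (k l : Fin 4) : b.coord k (b l) = if l = k then 1 else 0 := by
  simp [Basis.coord_apply, Basis.repr_self, Finsupp.single_apply]

lemma fAlt_wB (n : ℕ) {s t : Fin n → Fin 4} (hs : StrictMono s) (ht : StrictMono t) :
    fAlt b n s (fun i => b (t i)) = if s = t then 1 else 0 := by
  rw [fAlt_apply]
  by_cases h : s = t
  · subst h
    rw [if_pos rfl]
    have h1 : (Matrix.of fun i j => b.coord (s j) (b (s i))) = 1 := by
      ext i j
      rw [Matrix.of_apply, coord_basis, Matrix.one_apply]
      simp [hs.injective.eq_iff]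
    rw [h1, Matrix.det_one]
  · rw [if_neg h]
    obtain ⟨j, hj⟩ : ∃ j, ∀ i, t i ≠ s j := by
      by_contra hcon
      push_neg at hcon
      apply h
      haveI : WellFoundedLT (Fin n) := Finite.to_wellFoundedLT
      rw [← hs.range_inj ht]
      have h1 : Set.range s ⊆ Set.range t := by
        rintro _ ⟨j, rfl⟩
        obtain ⟨i, hi⟩ := hcon j
        exact ⟨i, hi⟩
      refine Set.eq_of_subset_of_ncard_le h1 ?_ (Set.finite_range t)
      rw [Set.ncard_eq_toFinset_card', Set.ncard_eq_toFinset_card']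
      rw [Set.toFinset_range, Set.toFinset_range,
        Finset.card_image_of_injective _ hs.injective,
        Finset.card_image_of_injective _ ht.injective]
    apply Matrix.det_eq_zero_of_column_eq_zero j
    intro i
    simp [coord_basis, hj i]

end FlagAux

namespace FlagAux
variable {K V : Type*} [Field K] [AddCommGroup V] [Module K V] (b : Basis (Fin 4) K V)

noncomputable def phiB (n : ℕ) (s : Fin n → Fin 4) : ↥(⋀[K]^n V) →ₗ[K] K :=
  (ExteriorAlgebra.liftAlternating
      (fun i => if h : n = i then h ▸ fAlt b n s else 0)).comp
    (Submodule.subtype _)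

lemma phiB_gen (n : ℕ) (s : Fin n → Fin 4) (v : Fin n → V) :
    phiB b n s (gen n v) = fAlt b n s v := by
  simp only [phiB, gen, LinearMap.comp_apply, Submodule.subtype_apply]
  rw [ExteriorAlgebra.liftAlternating_apply_ιMulti, dif_pos rfl]

instance (n : ℕ) : DecidablePred (StrictMono : (Fin n → Fin 4) → Prop) :=
  fun _ => decidable_of_iff (∀ a b : Fin n, a < b → _ < _) Iff.rfl

lemma wB_linearIndependent (n : ℕ) :
    LinearIndependent K (fun s : {s : Fin n → Fin 4 // StrictMono s} => wB b n s.1) := by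
  classical
  rw [Fintype.linearIndependent_iff]
  intro g hg s₀
  have h := congrArg (phiB b n s₀.1) hg
  rw [map_sum, map_zero] at h
  simp only [map_smul, wB, phiB_gen, smul_eq_mul] at h
  rw [Finset.sum_eq_single s₀] at h
  · rwa [fAlt_wB b n s₀.2 s₀.2, if_pos rfl, mul_one] at h
  · intro t _ hts
    rw [fAlt_wB b n s₀.2 t.2, if_neg (fun he => hts (Subtype.ext he.symm)), mul_zero]
  · intro hs; exact absurd (Finset.mem_univ s₀) hs

lemma wB_span (n : ℕ) :
    Submodule.span K
      (Set.range fun s : {s : Fin n → Fin 4 // StrictMono s} => wB b n s.1) = ⊤ := by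
  classical
  set T := Submodule.span K
      (Set.range fun s : {s : Fin n → Fin 4 // StrictMono s} => wB b n s.1) with hT
  have key : ∀ r : Fin n → Fin 4,
      ExteriorAlgebra.ιMulti K n (fun i => b (r i)) ∈ T.map (Submodule.subtype _) := by
    intro r
    by_cases hinj : Function.Injective r
    · -- sort r
      haveI : WellFoundedLT (Fin n) := Finite.to_wellFoundedLT
      set σ := Tuple.sort r with hσ
      have hmono : Monotone (r ∘ σ) := Tuple.monotone_sort r
      have hsm : StrictMono (r ∘ σ) :=
        hmono.strictMono_of_injective (hinj.comp σ.injective)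
      have hperm :
          ExteriorAlgebra.ιMulti K n ((fun i => b (r i)) ∘ σ) =
            Equiv.Perm.sign σ • ExteriorAlgebra.ιMulti K n (fun i => b (r i)) :=
        AlternatingMap.map_perm _ _ σ
      have hmem : ExteriorAlgebra.ιMulti K n ((fun i => b (r i)) ∘ σ) ∈
          T.map (Submodule.subtype _) := by
        refine ⟨wB b n (r ∘ σ), Submodule.subset_span ⟨⟨r ∘ σ, hsm⟩, rfl⟩, rfl⟩
      rcases Int.units_eq_one_or (Equiv.Perm.sign σ) with h1 | h1 <;>
        rw [h1] at hperm
      · rw [one_smul] at hperm; rwa [← hperm]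
      · rw [show ((-1 : ℤˣ) • ExteriorAlgebra.ιMulti K n fun i => b (r i)) =
            -(ExteriorAlgebra.ιMulti K n fun i => b (r i)) by simp] at hperm
        have := neg_mem hmem
        rwa [hperm, neg_neg] at this
    · obtain ⟨x, y, hxy, hne⟩ := Function.not_injective_iff.1 hinj
      rw [AlternatingMap.map_eq_zero_of_eq (ExteriorAlgebra.ιMulti K n)
        (fun i => b (r i)) (show b (r x) = b (r y) by rw [hxy]) hne]
      exact zero_mem _
  rw [Submodule.eq_top_iff']
  intro x
  have h2 : Submodule.span K (Set.range (ExteriorAlgebra.ιMulti K n (M := V))) ≤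
      T.map (Submodule.subtype _) := by
    rw [Submodule.span_le]
    rintro _ ⟨v, rfl⟩
    have hv : ExteriorAlgebra.ιMulti K n v =
        ∑ r : Fin n → Fin 4, (∏ i, b.repr (v i) (r i)) •
          ExteriorAlgebra.ιMulti K n (fun i => b (r i)) := by
      have hv0 : v = fun i => ∑ k, b.repr (v i) k • b k :=
        funext fun i => (b.sum_repr (v i)).symm
      conv_lhs => rw [hv0]
      rw [show (ExteriorAlgebra.ιMulti K n) (fun i => ∑ k : Fin 4, b.repr (v i) k • b k) =
        (ExteriorAlgebra.ιMulti K n).toMultilinearMap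
          (fun i => ∑ k : Fin 4, b.repr (v i) k • b k) from rfl]
      rw [MultilinearMap.map_sum]
      refine Finset.sum_congr rfl fun r _ => ?_
      rw [MultilinearMap.map_smul_univ]
      rfl
    rw [hv]
    exact Submodule.sum_mem _ fun r _ => Submodule.smul_mem _ _ (key r)
  have hx : (x : ExteriorAlgebra K V) ∈ T.map (Submodule.subtype _) :=
    h2 (by rw [ExteriorAlgebra.ιMulti_span_fixedDegree]; exact x.2)
  obtain ⟨y, hy, hval⟩ := hx
  rwa [show x = y from Subtype.ext hval.symm]


noncomputable def exteriorBasis (n : ℕ) :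
    Basis {s : Fin n → Fin 4 // StrictMono s} K ↥(⋀[K]^n V) :=
  Basis.mk (wB_linearIndependent b n) (wB_span b n).ge

end FlagAux

section Assembly

variable {K V : Type*} [Field K] [AddCommGroup V] [Module K V]

lemma gen3_eq_wedge3 (v : Fin 3 → V) :
    FlagAux.gen 3 v = wedge3 K V (v 0) (v 1) (v 2) := by
  apply Subtype.ext
  show ExteriorAlgebra.ιMulti K 3 v = ExteriorAlgebra.ιMulti K 3 ![v 0, v 1, v 2]
  congr 1
  ext i
  fin_cases i <;> rfl

lemma wedge3_same (p x : V) : wedge3 K V p p x = 0 := by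
  apply Subtype.ext
  show ExteriorAlgebra.ιMulti K 3 ![p, p, x] = 0
  exact AlternatingMap.map_eq_zero_of_eq _ ![p, p, x] (i := 0) (j := 1) rfl (by decide)

end Assembly

set_option maxHeartbeats 1000000 in
set_option synthInstance.maxHeartbeats 400000 in
/-- The kernels of `i₀₁` and `i₁₂` together span `Ṽ`; consequently their intersection has
dimension `80 + 80 − 96 = 64`, so the flag variety lies in a 63-dimensional projective
subspace of the 95-dimensional projective space on `Ṽ`. -/
theorem ker_i01_sup_ker_i12_eq_top_and_finrank_inf
    (hV : Module.finrank K V = 4)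
    (w : V →ₗ[K] ↥(⋀[K]^2 V) →ₗ[K] ↥(⋀[K]^3 V))
    (hw : ∀ p q r : V, w p (wedge2 K V q r) = wedge3 K V p q r)
    (i01 : FlagTensor K V →ₗ[K] (↥(⋀[K]^3 V) ⊗[K] Module.Dual K V))
    (hi01 : ∀ (p : V) (t : ⋀[K]^2 V) (e : Module.Dual K V),
      i01 (p ⊗ₜ[K] t ⊗ₜ[K] e) = (w p t) ⊗ₜ[K] e)
    (c : Module.Dual K V → (↥(⋀[K]^2 V) →ₗ[K] V))
    (hc : ∀ (e : Module.Dual K V) (q r : V),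
      c e (wedge2 K V q r) = e q • r - e r • q)
    (i12 : FlagTensor K V →ₗ[K] (V ⊗[K] V))
    (hi12 : ∀ (p : V) (t : ⋀[K]^2 V) (e : Module.Dual K V),
      i12 (p ⊗ₜ[K] t ⊗ₜ[K] e) = p ⊗ₜ[K] (c e t)) :
    LinearMap.ker i01 ⊔ LinearMap.ker i12 = ⊤ ∧
    Module.finrank K (LinearMap.ker i01 ⊓ LinearMap.ker i12 :
      Submodule K (FlagTensor K V)) = 64 := by
  classical
  have hfd : FiniteDimensional K V := Module.finite_of_finrank_eq_succ (n := 3) hV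
  let b : Basis (Fin 4) K V := Module.finBasisOfFinrankEq K V hV
  haveI fin2 : Module.Finite K ↥(⋀[K]^2 V) :=
    Module.Finite.of_basis (FlagAux.exteriorBasis b 2)
  haveI fin3 : Module.Finite K ↥(⋀[K]^3 V) :=
    Module.Finite.of_basis (FlagAux.exteriorBasis b 3)
  have hr2 : Module.finrank K ↥(⋀[K]^2 V) = 6 := by
    rw [Module.finrank_eq_card_basis (FlagAux.exteriorBasis b 2)]; decide
  have hr3 : Module.finrank K ↥(⋀[K]^3 V) = 4 := by
    rw [Module.finrank_eq_card_basis (FlagAux.exteriorBasis b 3)]; decide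
  have hV' : Module.finrank K (Module.Dual K V) = 4 := by
    rw [Subspace.dual_finrank_eq, hV]
  have e96 : Module.finrank K (FlagTensor K V) = 96 := by
    rw [Module.finrank_tensorProduct, Module.finrank_tensorProduct, hV, hr2, hV']
  -- surjectivity of i01
  have hsurj01 : LinearMap.range i01 = ⊤ := by
    rw [eq_top_iff, ← TensorProduct.span_tmul_eq_top K (↥(⋀[K]^3 V)) (Module.Dual K V),
      Submodule.span_le]
    rintro _ ⟨a, e, rfl⟩
    have ha : a ∈ Submodule.span K (Set.range (FlagAux.gen (K := K) (V := V) 3)) := by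
      rw [FlagAux.span_gen]; trivial
    rw [SetLike.mem_coe]
    induction ha using Submodule.span_induction with
    | mem a hmem =>
      obtain ⟨v, rfl⟩ := hmem
      refine ⟨v 0 ⊗ₜ[K] wedge2 K V (v 1) (v 2) ⊗ₜ[K] e, ?_⟩
      rw [hi01, hw, gen3_eq_wedge3]
    | zero => rw [TensorProduct.zero_tmul]; exact zero_mem _
    | add x y hx hy ihx ihy =>
      rw [TensorProduct.add_tmul]; exact add_mem ihx ihy
    | smul t x hx ih =>
      rw [← TensorProduct.smul_tmul']; exact Submodule.smul_mem _ _ ih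
  -- the image of `ker i01` under `i12` is everything
  have hmap : (LinearMap.ker i01).map i12 = ⊤ := by
    rw [eq_top_iff, ← TensorProduct.span_tmul_eq_top K V V, Submodule.span_le]
    rintro _ ⟨p, x, rfl⟩
    by_cases hp : p = 0
    · subst hp; rw [TensorProduct.zero_tmul]; exact zero_mem _
    · obtain ⟨f, hf⟩ : ∃ f : Module.Dual K V, f p ≠ 0 := by
        by_contra hcon; push_neg at hcon
        exact hp ((Module.forall_dual_apply_eq_zero_iff K p).1 hcon)
      set e₁ : Module.Dual K V := (f p)⁻¹ • f with he₁def
      have he₁ : e₁ p = 1 := by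
        simp [he₁def, inv_mul_cancel₀ hf]
      obtain ⟨r, hr⟩ : ∃ r : V, r ∉ Submodule.span K {p} := by
        by_contra hcon; push_neg at hcon
        have htop : Submodule.span K {p} = (⊤ : Submodule K V) :=
          Submodule.eq_top_iff'.2 hcon
        have h1 : Module.finrank K (Submodule.span K {p}) = 1 :=
          finrank_span_singleton hp
        rw [htop, finrank_top, hV] at h1
        exact absurd h1 (by norm_num)
      obtain ⟨e₂, he₂r, he₂map⟩ :=
        Submodule.exists_dual_map_eq_bot_of_notMem hr inferInstance
      have he₂p : e₂ p = 0 := by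
        have hmem : e₂ p ∈ (Submodule.span K {p}).map e₂ :=
          ⟨p, Submodule.mem_span_singleton_self p, rfl⟩
        rw [he₂map] at hmem
        exact (Submodule.mem_bot K).1 hmem
      refine ⟨p ⊗ₜ[K] (wedge2 K V p x) ⊗ₜ[K] e₁ +
          (-(e₁ x) * (e₂ r)⁻¹) • (p ⊗ₜ[K] (wedge2 K V p r) ⊗ₜ[K] e₂), ?_, ?_⟩
      · rw [SetLike.mem_coe, LinearMap.mem_ker, map_add, map_smul, hi01, hi01, hw, hw,
          wedge3_same, wedge3_same, TensorProduct.zero_tmul, TensorProduct.zero_tmul,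
          smul_zero, add_zero]
      · rw [map_add, map_smul, hi12, hi12, hc, hc, he₁, he₂p]
        simp only [one_smul, zero_smul, zero_sub, TensorProduct.tmul_sub,
          TensorProduct.tmul_neg, TensorProduct.tmul_smul, smul_neg, smul_smul]
        rw [mul_assoc, inv_mul_cancel₀ he₂r, mul_one, neg_smul, neg_neg]
        abel
  have hsurj12 : LinearMap.range i12 = ⊤ :=
    top_unique (hmap ▸ LinearMap.map_le_range)
  have hsup : LinearMap.ker i01 ⊔ LinearMap.ker i12 = ⊤ := by
    rw [Submodule.eq_top_iff']
    intro x
    have hx : i12 x ∈ (LinearMap.ker i01).map i12 := by rw [hmap]; trivial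
    obtain ⟨a, ha, hax⟩ := hx
    refine Submodule.mem_sup.2 ⟨a, ha, x - a, ?_, by abel⟩
    rw [LinearMap.mem_ker, map_sub, hax, sub_self]
  have hk1 : Module.finrank K (LinearMap.ker i01) = 80 := by
    have h := LinearMap.finrank_range_add_finrank_ker i01
    rw [hsurj01, finrank_top, e96, Module.finrank_tensorProduct, hr3, hV'] at h
    omega
  have hk2 : Module.finrank K (LinearMap.ker i12) = 80 := by
    have h := LinearMap.finrank_range_add_finrank_ker i12
    rw [hsurj12, finrank_top, e96, Module.finrank_tensorProduct, hV] at h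
    omega
  refine ⟨hsup, ?_⟩
  have h := Submodule.finrank_sup_add_finrank_inf_eq (LinearMap.ker i01) (LinearMap.ker i12)
  rw [hsup, finrank_top, e96, hk1, hk2] at h
  omega
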